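/- Let H be a complex Hilbert space, S and T bounded self-adjoint operators on H, and a a bounded operator on H. Set B = S∘a − a∘T, and for λ ≥ 0 write R_λ(S) = (1 + λ² + S²)⁻¹ and R_λ(T) = (1 + λ² + T²)⁻¹. Then the map λ ↦ R_λ(S) ∘ ((1 + λ²)·B − S∘B∘T) ∘ R_λ(T) is Bochner integrable on [0, ∞), and f(S)∘a − a∘f(T) = (2/π) · ∫₀^∞ R_λ(S) ∘ ((1 + λ²)·B − S∘B∘T) ∘ R_λ(T) dλ, where f(S), f(T) denote the continuous functional calculus of f(x) = x/√(1 + x²) applied to S and T respectively. -/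

import Mathlib

open MeasureTheory

section scalarAux

lemma deriv_aux4 (c : ℝ) (hc : 0 < c) (l : ℝ) :
    HasDerivAt (fun l : ℝ => c⁻¹ * Real.arctan (l / c)) ((c ^ 2 + l ^ 2)⁻¹) l := by
  have h1 : HasDerivAt (fun l : ℝ => l / c) c⁻¹ l := by
    simpa using (hasDerivAt_id l).div_const c
  have h3 := ((Real.hasDerivAt_arctan (l / c)).comp l h1).const_mul c⁻¹
  convert h3 using 1
  have hc' : c ≠ 0 := hc.ne'
  · rfl
  · rfl
  · rfl
  field_simp

lemma integrable_aux4 (c : ℝ) (hc : 1 ≤ c) :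
    IntegrableOn (fun l : ℝ => (c ^ 2 + l ^ 2)⁻¹) (Set.Ici 0) volume := by
  have hcont : Continuous fun l : ℝ => (c ^ 2 + l ^ 2)⁻¹ := by
    refine Continuous.inv₀ (by fun_prop) fun x => ?_
    positivity
  refine (integrable_inv_one_add_sq.integrableOn (s := Set.Ici 0)).mono'
    hcont.aestronglyMeasurable ?_
  refine Filter.Eventually.of_forall fun x => ?_
  have h1 : (0:ℝ) < c ^ 2 + x ^ 2 := by positivity
  rw [Real.norm_eq_abs, abs_of_pos (by positivity)]
  refine inv_anti₀ (by positivity) ?_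
  nlinarith

lemma integral_aux4 (c : ℝ) (hc : 1 ≤ c) :
    ∫ l in Set.Ici (0:ℝ), (c ^ 2 + l ^ 2)⁻¹ = Real.pi / (2 * c) := by
  have hc0 : (0:ℝ) < c := lt_of_lt_of_le one_pos hc
  rw [MeasureTheory.integral_Ici_eq_integral_Ioi]
  have htend : Filter.Tendsto (fun l : ℝ => c⁻¹ * Real.arctan (l / c)) Filter.atTop
      (nhds (c⁻¹ * (Real.pi / 2))) := by
    refine Filter.Tendsto.const_mul _ ?_
    refine (Real.tendsto_arctan_atTop.mono_right nhdsWithin_le_nhds).comp ?_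
    exact Filter.tendsto_id.atTop_div_const hc0
  have := integral_Ioi_of_hasDerivAt_of_tendsto' (a := 0)
    (fun x _ => deriv_aux4 c hc0 x)
    ((integrable_aux4 c hc).mono_set Set.Ioi_subset_Ici_self) htend
  rw [this]
  rw [zero_div, Real.arctan_zero, mul_zero, sub_zero, mul_comm, ← div_eq_mul_inv, div_div]

lemma sqrt_facts4 (x : ℝ) :
    1 ≤ Real.sqrt (1 + x ^ 2) ∧ Real.sqrt (1 + x ^ 2) ^ 2 = 1 + x ^ 2 := by
  constructor
  · nlinarith [Real.sq_sqrt (show (0:ℝ) ≤ 1 + x ^ 2 by positivity),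
      Real.sqrt_nonneg (1 + x ^ 2)]
  · exact Real.sq_sqrt (by positivity)

lemma scalar_formula4 (x : ℝ) :
    ∫ l in Set.Ici (0:ℝ), x * (1 + l ^ 2 + x ^ 2)⁻¹ =
      (Real.pi / 2) * (x / Real.sqrt (1 + x ^ 2)) := by
  obtain ⟨hc1, hc2⟩ := sqrt_facts4 x
  set c := Real.sqrt (1 + x ^ 2) with hc
  have hc0 : (0:ℝ) < c := lt_of_lt_of_le one_pos hc1
  have hfun : (fun l : ℝ => x * (1 + l ^ 2 + x ^ 2)⁻¹) =
      fun l : ℝ => x * (c ^ 2 + l ^ 2)⁻¹ := by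
    funext l; rw [hc2]; ring_nf
  rw [hfun, MeasureTheory.integral_const_mul, integral_aux4 c hc1]
  field_simp

end scalarAux

/-- The resolvent `(1 + l² + T²)⁻¹` of a bounded operator `T` on a complex Hilbert
space (via `Ring.inverse`, which gives the honest inverse when it exists). -/
noncomputable def resolvent4 {H : Type*} [NormedAddCommGroup H] [InnerProductSpace ℂ H]
    [CompleteSpace H] (T : H →L[ℂ] H) (l : ℝ) : H →L[ℂ] H :=
  Ring.inverse (((1 + l ^ 2 : ℝ) : ℂ) • (1 : H →L[ℂ] H) + T ^ 2)

section opAux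

variable {H : Type*} [NormedAddCommGroup H] [InnerProductSpace ℂ H] [CompleteSpace H]

lemma contInv4 (l : ℝ) : Continuous (fun x : ℝ => (1 + l ^ 2 + x ^ 2)⁻¹) := by
  refine Continuous.inv₀ (by fun_prop) fun x => by positivity

lemma cfc_P4 (T : H →L[ℂ] H) (hT : IsSelfAdjoint T) (l : ℝ) :
    ((1 + l ^ 2 : ℝ) : ℂ) • (1 : H →L[ℂ] H) + T ^ 2 =
      cfc (fun x : ℝ => 1 + l ^ 2 + x ^ 2) T := by
  rw [cfc_add (a := T) (fun _ : ℝ => 1 + l ^ 2) (fun x : ℝ => x ^ 2),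
    cfc_const (1 + l ^ 2) T hT, cfc_pow_id T 2 hT,
    Algebra.algebraMap_eq_smul_one, Complex.coe_smul]

lemma cfc_cancel4 (T : H →L[ℂ] H) (hT : IsSelfAdjoint T) (l : ℝ) :
    cfc (fun x : ℝ => 1 + l ^ 2 + x ^ 2) T *
        cfc (fun x : ℝ => (1 + l ^ 2 + x ^ 2)⁻¹) T = 1 ∧
    cfc (fun x : ℝ => (1 + l ^ 2 + x ^ 2)⁻¹) T *
        cfc (fun x : ℝ => 1 + l ^ 2 + x ^ 2) T = 1 := by
  constructor
  · rw [← cfc_mul (a := T) _ _ (by fun_prop) (contInv4 l).continuousOn]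
    calc cfc (fun x : ℝ => (1 + l ^ 2 + x ^ 2) * (1 + l ^ 2 + x ^ 2)⁻¹) T
        = cfc (fun _ : ℝ => (1 : ℝ)) T := by
          refine cfc_congr fun x _ => mul_inv_cancel₀ (by positivity)
      _ = 1 := by rw [cfc_const 1 T hT, map_one]
  · rw [← cfc_mul (a := T) _ _ (contInv4 l).continuousOn (by fun_prop)]
    calc cfc (fun x : ℝ => (1 + l ^ 2 + x ^ 2)⁻¹ * (1 + l ^ 2 + x ^ 2)) T
        = cfc (fun _ : ℝ => (1 : ℝ)) T := by
          refine cfc_congr fun x _ => inv_mul_cancel₀ (by positivity)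
      _ = 1 := by rw [cfc_const 1 T hT, map_one]

lemma resolvent_eq4 (T : H →L[ℂ] H) (hT : IsSelfAdjoint T) (l : ℝ) :
    resolvent4 T l = cfc (fun x : ℝ => (1 + l ^ 2 + x ^ 2)⁻¹) T := by
  rw [resolvent4, cfc_P4 T hT l]
  exact Ring.inverse_unit ⟨_, _, (cfc_cancel4 T hT l).1, (cfc_cancel4 T hT l).2⟩

lemma resolvent_cancel4 (T : H →L[ℂ] H) (hT : IsSelfAdjoint T) (l : ℝ) :
    (((1 + l ^ 2 : ℝ) : ℂ) • (1 : H →L[ℂ] H) + T ^ 2) * resolvent4 T l = 1 ∧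
    resolvent4 T l * (((1 + l ^ 2 : ℝ) : ℂ) • (1 : H →L[ℂ] H) + T ^ 2) = 1 := by
  rw [resolvent_eq4 T hT l, cfc_P4 T hT l]
  exact cfc_cancel4 T hT l

lemma mul_resolvent_eq4 (T : H →L[ℂ] H) (hT : IsSelfAdjoint T) (l : ℝ) :
    T * resolvent4 T l = cfc (fun x : ℝ => x * (1 + l ^ 2 + x ^ 2)⁻¹) T := by
  rw [resolvent_eq4 T hT l]
  nth_rewrite 1 [← cfc_id' ℝ T hT]
  rw [← cfc_mul (a := T) _ _ (by fun_prop) (contInv4 l).continuousOn]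

lemma resolvent_mul_eq4 (T : H →L[ℂ] H) (hT : IsSelfAdjoint T) (l : ℝ) :
    resolvent4 T l * T = cfc (fun x : ℝ => x * (1 + l ^ 2 + x ^ 2)⁻¹) T := by
  rw [resolvent_eq4 T hT l]
  nth_rewrite 2 [← cfc_id' ℝ T hT]
  rw [← cfc_mul (a := T) _ _ (contInv4 l).continuousOn (by fun_prop)]
  exact cfc_congr fun x _ => mul_comm _ _

lemma pointwise_eq4 (S T : H →L[ℂ] H) (hS : IsSelfAdjoint S) (hT : IsSelfAdjoint T)
    (a : H →L[ℂ] H) (l : ℝ) :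
    resolvent4 S l *
        (((1 + l ^ 2 : ℝ) : ℂ) • (S * a - a * T) - S * (S * a - a * T) * T) *
        resolvent4 T l =
      cfc (fun x : ℝ => x * (1 + l ^ 2 + x ^ 2)⁻¹) S * a -
        a * cfc (fun x : ℝ => x * (1 + l ^ 2 + x ^ 2)⁻¹) T := by
  set c : ℂ := ((1 + l ^ 2 : ℝ) : ℂ) with hc
  set PS : H →L[ℂ] H := c • (1 : H →L[ℂ] H) + S ^ 2 with hPS
  set PT : H →L[ℂ] H := c • (1 : H →L[ℂ] H) + T ^ 2 with hPT
  set RS : H →L[ℂ] H := resolvent4 S l with hRS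
  set RT : H →L[ℂ] H := resolvent4 T l with hRT
  have hPTRT : PT * RT = 1 := (resolvent_cancel4 T hT l).1
  have hRSPS : RS * PS = 1 := (resolvent_cancel4 S hS l).2
  have hmid : c • (S * a - a * T) - S * (S * a - a * T) * T = S * a * PT - PS * a * T := by
    simp only [hPS, hPT, smul_sub, mul_sub, sub_mul, mul_add, add_mul, mul_smul_comm,
      smul_mul_assoc, mul_one, one_mul, pow_two, mul_assoc]
    abel
  rw [hmid]
  have key : RS * (S * a * PT - PS * a * T) * RT =
      (RS * S) * a * (PT * RT) - (RS * PS) * (a * (T * RT)) := by noncomm_ring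
  rw [key, hPTRT, hRSPS, mul_one, one_mul, resolvent_mul_eq4 S hS l, mul_resolvent_eq4 T hT l]

lemma op_int4 (T : H →L[ℂ] H) (hT : IsSelfAdjoint T) :
    Integrable (fun l => cfc (fun x : ℝ => x * (1 + l ^ 2 + x ^ 2)⁻¹) T)
      (volume.restrict (Set.Ici 0)) ∧
    ∫ l in Set.Ici (0:ℝ), cfc (fun x : ℝ => x * (1 + l ^ 2 + x ^ 2)⁻¹) T =
      ((Real.pi / 2 : ℝ)) • cfc (fun x : ℝ => x / Real.sqrt (1 + x ^ 2)) T := by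
  have hgc : ∀ l : ℝ, Continuous (fun x : ℝ => x * (1 + l ^ 2 + x ^ 2)⁻¹) := by
    intro l
    exact continuous_id.mul (Continuous.inv₀ (by fun_prop) fun x => by positivity)
  set fc : ℝ → C(spectrum ℝ T, ℝ) :=
    fun l => ⟨_, ((hgc l).continuousOn (s := spectrum ℝ T)).restrict⟩ with hfc
  have hG : Continuous
      (fun p : ℝ × spectrum ℝ T => (p.2 : ℝ) * (1 + p.1 ^ 2 + (p.2 : ℝ) ^ 2)⁻¹) := by
    refine Continuous.mul (by fun_prop) (Continuous.inv₀ (by fun_prop) fun p => by positivity)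
  have hfc_cont : Continuous fc := by
    have := (ContinuousMap.curry ⟨_, hG⟩).continuous
    exact this
  have hbound : ∀ l : ℝ, ‖fc l‖ ≤ (‖T‖ * ‖(1 : H →L[ℂ] H)‖) * (1 + l ^ 2)⁻¹ := by
    intro l
    have h0 : (0:ℝ) ≤ (‖T‖ * ‖(1 : H →L[ℂ] H)‖) * (1 + l ^ 2)⁻¹ := by positivity
    rw [ContinuousMap.norm_le _ h0]
    rintro ⟨z, hz⟩
    have hz' : ‖z‖ ≤ ‖T‖ * ‖(1 : H →L[ℂ] H)‖ := spectrum.norm_le_norm_mul_of_mem hz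
    simp only [hfc, ContinuousMap.coe_mk, Set.restrict_apply, Real.norm_eq_abs]
    rw [abs_mul, abs_inv, abs_of_pos (show (0:ℝ) < 1 + l ^ 2 + z ^ 2 by positivity)]
    have h2 : (1 + l ^ 2 + z ^ 2)⁻¹ ≤ (1 + l ^ 2)⁻¹ :=
      inv_anti₀ (by positivity) (by nlinarith)
    have h3 : |z| ≤ ‖T‖ * ‖(1 : H →L[ℂ] H)‖ := by rwa [Real.norm_eq_abs] at hz'
    exact mul_le_mul h3 h2 (by positivity) (by positivity)
  have hb_int : Integrable (fun l : ℝ => (‖T‖ * ‖(1 : H →L[ℂ] H)‖) * (1 + l ^ 2)⁻¹)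
      (volume.restrict (Set.Ici 0)) :=
    (integrable_inv_one_add_sq.integrableOn (s := Set.Ici 0)).const_mul _
  have hfc_int : Integrable fc (volume.restrict (Set.Ici 0)) := by
    refine Integrable.mono' hb_int (hfc_cont.aestronglyMeasurable) ?_
    exact Filter.Eventually.of_forall fun l => hbound l
  have key : ∀ l : ℝ,
      cfc (fun x : ℝ => x * (1 + l ^ 2 + x ^ 2)⁻¹) T = cfcL (R := ℝ) hT (fc l) :=
    fun l => cfc_eq_cfcL hT ((hgc l).continuousOn)
  constructor
  · simp_rw [key]
    exact (cfcL (R := ℝ) hT).integrable_comp hfc_int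
  · have h1 : ∫ l in Set.Ici (0:ℝ), cfc (fun x : ℝ => x * (1 + l ^ 2 + x ^ 2)⁻¹) T =
        cfcL (R := ℝ) hT (∫ l in Set.Ici (0:ℝ), fc l) := by
      simp_rw [key]
      exact ContinuousLinearMap.integral_comp_comm _ hfc_int
    have hfcont : Continuous (fun x : ℝ => x / Real.sqrt (1 + x ^ 2)) := by
      refine continuous_id.div (by fun_prop) fun x => ?_
      have := (sqrt_facts4 x).1; positivity
    have h2 : (∫ l in Set.Ici (0:ℝ), fc l) =
        (Real.pi / 2 : ℝ) • ⟨_, (hfcont.continuousOn (s := spectrum ℝ T)).restrict⟩ := by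
      ext z
      rw [ContinuousMap.integral_apply hfc_int]
      simpa [hfc] using scalar_formula4 (z : ℝ)
    rw [h1, h2, ContinuousLinearMap.map_smul, cfc_eq_cfcL hT (hfcont.continuousOn)]

end opAux

set_option synthInstance.maxHeartbeats 1000000 in
/-- The two-operator commutator integral formula: for bounded self-adjoint `S`, `T`,
a bounded operator `a`, and `B = S a − a T`, the map
`l ↦ R_l(S) ((1 + l²) B − S B T) R_l(T)` is Bochner integrable on `[0, ∞)` and
`f(S) a − a f(T) = (2/π) ∫₀^∞ R_l(S) ((1 + l²) B − S B T) R_l(T) dl`, where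
`f(x) = x / √(1 + x²)` is applied via the continuous functional calculus. -/
theorem stmt4 {H : Type*} [NormedAddCommGroup H] [InnerProductSpace ℂ H] [CompleteSpace H]
    (S T : H →L[ℂ] H) (hS : IsSelfAdjoint S) (hT : IsSelfAdjoint T) (a : H →L[ℂ] H) :
    IntegrableOn
      (fun l : ℝ =>
        resolvent4 S l *
          (((1 + l ^ 2 : ℝ) : ℂ) • (S * a - a * T) - S * (S * a - a * T) * T) *
          resolvent4 T l)
      (Set.Ici 0) volume ∧
    cfc (fun x : ℝ => x / Real.sqrt (1 + x ^ 2)) S * a -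
        a * cfc (fun x : ℝ => x / Real.sqrt (1 + x ^ 2)) T =
      ((2 / Real.pi : ℝ) : ℂ) •
        ∫ l in Set.Ici (0 : ℝ),
          resolvent4 S l *
            (((1 + l ^ 2 : ℝ) : ℂ) • (S * a - a * T) - S * (S * a - a * T) * T) *
            resolvent4 T l := by
  obtain ⟨hSint, hSeq⟩ := op_int4 S hS
  obtain ⟨hTint, hTeq⟩ := op_int4 T hT
  set gS : ℝ → (H →L[ℂ] H) := fun l => cfc (fun x : ℝ => x * (1 + l ^ 2 + x ^ 2)⁻¹) S with hgS
  set gT : ℝ → (H →L[ℂ] H) := fun l => cfc (fun x : ℝ => x * (1 + l ^ 2 + x ^ 2)⁻¹) T with hgT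
  have hfun : (fun l : ℝ =>
      resolvent4 S l *
        (((1 + l ^ 2 : ℝ) : ℂ) • (S * a - a * T) - S * (S * a - a * T) * T) *
        resolvent4 T l) = fun l => gS l * a - a * gT l :=
    funext fun l => pointwise_eq4 S T hS hT a l
  set Ra : (H →L[ℂ] H) →L[ℂ] (H →L[ℂ] H) :=
    (ContinuousLinearMap.mul ℂ (H →L[ℂ] H)).flip a with hRa
  set La : (H →L[ℂ] H) →L[ℂ] (H →L[ℂ] H) :=
    ContinuousLinearMap.mul ℂ (H →L[ℂ] H) a with hLa
  have hRg : Integrable (fun l => gS l * a) (volume.restrict (Set.Ici 0)) :=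
    Ra.integrable_comp hSint
  have hLg : Integrable (fun l => a * gT l) (volume.restrict (Set.Ici 0)) :=
    La.integrable_comp hTint
  constructor
  · rw [IntegrableOn, hfun]
    exact hRg.sub hLg
  · rw [hfun]
    have hint : ∫ l in Set.Ici (0:ℝ), (gS l * a - a * gT l) =
        (∫ l in Set.Ici (0:ℝ), gS l) * a - a * ∫ l in Set.Ici (0:ℝ), gT l := by
      rw [integral_sub hRg hLg]
      congr 1
      · exact Ra.integral_comp_comm hSint
      · exact La.integral_comp_comm hTint
    rw [hint, hSeq, hTeq, smul_mul_assoc, mul_smul_comm, ← smul_sub,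
      Complex.coe_smul, smul_smul]
    rw [show (2 / Real.pi) * (Real.pi / 2) = 1 by
      field_simp]
    rw [one_smul]
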